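/- Let ρ(x, y, v₁, …, v_ℓ) be an L₂-formula with ℓ + 2 free variables that represents a strict partial order, i.e., for every dimension n ≥ 1 and every assignment of partial instances of dimension n to v₁, …, v_ℓ, the binary relation {(e, e') | B_n ⊨ ρ(e, e', v₁, …, v_ℓ)} on partial instances of dimension n is irreflexive and transitive. Then for every n ≥ 1, every sequence (e₁, …, e_k) of partial instances of dimension n that is a path in ρ — meaning there exist partial instances e'₁, …, e'_ℓ of dimension n with B_n ⊨ ρ(e_i, e_{i+1}, e'₁, …, e'_ℓ) for every i ∈ {1, …, k−1} — satisfies k ≤ (n+1)^{3^{ℓ+1}}. -/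
import Mathlib


open FirstOrder FirstOrder.Language

abbrev PI (n : ℕ) : Type := Fin n → Option Bool

def Subs {n : ℕ} (e e' : PI n) : Prop := ∀ i, e i ≠ none → e' i = e i

noncomputable def undefCard {n : ℕ} (e : PI n) : ℕ := Set.ncard {i | e i = none}

/-- `e ⪯ e'` iff `|e_⊥| ≥ |e'_⊥|`. -/
def Lel {n : ℕ} (e e' : PI n) : Prop := undefCard e' ≤ undefCard e

/-- The language `L₂` with two binary relation symbols (indexed by `Bool`). -/
def l2Lang : Language where
  Functions _ := Empty
  Relations n := match n with
    | 2 => Bool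
    | _ => Empty

/-- The structure `B_n`: partial instances of dimension `n`, with the first binary symbol
interpreted as subsumption `⊑` and the second as `⪯`. -/
instance l2Struct (n : ℕ) : l2Lang.Structure (PI n) where
  funMap := fun {_} f => f.elim
  RelMap := fun {k} r v => match k, r with
    | 2, false => Subs (v 0) (v 1)
    | 2, true => Lel (v 0) (v 1)

/-- The binary relation on partial instances of dimension `n` defined by the formula
`ρ(x, y, v₁, …, v_ℓ)` with the parameters `v₁, …, v_ℓ` instantiated to `vs`. -/
def RhoRel {ℓ n : ℕ} (ρ : l2Lang.Formula (Fin (ℓ + 2))) (vs : Fin ℓ → PI n)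
    (e e' : PI n) : Prop :=
  ρ.Realize (Fin.cons e (Fin.cons e' vs))

-- undefCard invariance under coordinate permutation
lemma undefCard_comp {n : ℕ} (e : PI n) (π : Equiv.Perm (Fin n)) :
    undefCard (e ∘ π) = undefCard e := by
  unfold undefCard
  have : {i | (e ∘ π) i = none} = π.symm '' {i | e i = none} := by
    rw [Equiv.image_eq_preimage_symm]; rfl
  rw [this, Set.ncard_image_of_injective _ π.symm.injective]

lemma subs_comp {n : ℕ} (e e' : PI n) (π : Equiv.Perm (Fin n)) :
    Subs (e ∘ π) (e' ∘ π) ↔ Subs e e' := by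
  constructor
  · intro h i hi
    have := h (π.symm i) (by simpa using hi)
    simpa using this
  · intro h i hi
    exact h (π i) hi

/-- Precomposition by a permutation as an `l2Lang`-equivalence. -/
def permEquiv {n : ℕ} (π : Equiv.Perm (Fin n)) : PI n ≃[l2Lang] PI n where
  toEquiv := {
    toFun := fun f => f ∘ π
    invFun := fun f => f ∘ π.symm
    left_inv := fun f => by ext i; simp
    right_inv := fun f => by ext i; simp }
  map_fun' := fun {m} f _ => f.elim
  map_rel' := fun {m} r x => by
    match m, r with
    | 2, false => exact subs_comp (x 0) (x 1) π
    | 2, true =>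
        show Lel (x 0 ∘ π) (x 1 ∘ π) ↔ Lel (x 0) (x 1)
        unfold Lel
        rw [undefCard_comp, undefCard_comp]

@[simp] lemma permEquiv_apply {n : ℕ} (π : Equiv.Perm (Fin n)) (f : PI n) :
    permEquiv π f = f ∘ π := rfl

lemma rhoRel_comp {ℓ n : ℕ} (ρ : l2Lang.Formula (Fin (ℓ + 2))) (vs : Fin ℓ → PI n)
    (π : Equiv.Perm (Fin n)) (hvs : ∀ t, vs t ∘ π = vs t) (a b : PI n) :
    RhoRel ρ vs (a ∘ π) (b ∘ π) ↔ RhoRel ρ vs a b := by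
  have key := StrongHomClass.realize_formula (L := l2Lang) (permEquiv π)
      (v := Fin.cons a (Fin.cons b vs)) (φ := ρ)
  have hc : ⇑(permEquiv π) ∘ (Fin.cons a (Fin.cons b vs)) =
      Fin.cons (a ∘ π) (Fin.cons (b ∘ π) vs) := by
    funext x
    refine Fin.cases ?_ (fun y => Fin.cases ?_ (fun z => ?_) y) x <;>
      simp [hvs]
  rw [hc] at key
  exact key

theorem stmt8 (ℓ : ℕ) (ρ : l2Lang.Formula (Fin (ℓ + 2)))
    (hpo : ∀ n : ℕ, 1 ≤ n → ∀ vs : Fin ℓ → PI n,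
      (∀ e : PI n, ¬ RhoRel ρ vs e e) ∧
      (∀ e₁ e₂ e₃ : PI n, RhoRel ρ vs e₁ e₂ → RhoRel ρ vs e₂ e₃ → RhoRel ρ vs e₁ e₃)) :
    ∀ n : ℕ, 1 ≤ n → ∀ (k : ℕ) (es : Fin k → PI n),
      (∃ vs : Fin ℓ → PI n, ∀ (i : ℕ) (h : i + 1 < k),
        RhoRel ρ vs (es ⟨i, Nat.lt_of_succ_lt h⟩) (es ⟨i + 1, h⟩)) →
      k ≤ (n + 1) ^ (3 ^ (ℓ + 1)) := by
  classical
  intro n hn k es ⟨vs, hpath⟩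
  obtain ⟨hirr, htrans⟩ := hpo n hn vs
  -- chain property
  have hchain : ∀ (d i : ℕ) (h : i + d + 1 < k),
      RhoRel ρ vs (es ⟨i, by omega⟩) (es ⟨i + d + 1, h⟩) := by
    intro d
    induction d with
    | zero => intro i h; exact hpath i h
    | succ d ih =>
      intro i h
      exact htrans _ _ _ (ih i (by omega)) (hpath (i + d + 1) h)
  have hchain' : ∀ (i j : Fin k), (i : ℕ) < (j : ℕ) → RhoRel ρ vs (es i) (es j) := by
    intro i j hij
    have h : (i : ℕ) + ((j : ℕ) - (i : ℕ) - 1) + 1 < k := by omega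
    have h2 := hchain ((j : ℕ) - (i : ℕ) - 1) i h
    rwa [Fin.eta, show (⟨(i : ℕ) + ((j : ℕ) - (i : ℕ) - 1) + 1, h⟩ : Fin k) = j from
      Fin.ext (by simp only [Fin.val_mk]; omega)] at h2
  -- column pattern
  set P := Fin (ℓ + 1) → Option Bool with hP
  let col : PI n → Fin n → P := fun e c => Fin.cons (e c) (fun t => vs t c)
  let T : PI n → P → Fin (n + 1) := fun e p =>
    ⟨Fintype.card {c // col e c = p}, by
      have := Fintype.card_subtype_le (fun c => col e c = p)
      simpa using Nat.lt_succ_of_le this⟩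
  -- key: T injective on the chain
  have hkey : ∀ (i j : Fin k), (i : ℕ) < (j : ℕ) → T (es i) ≠ T (es j) := by
    intro i j hij hT
    have hfib : ∀ p : P, Fintype.card {c // col (es i) c = p}
        = Fintype.card {c // col (es j) c = p} := by
      intro p
      have := congrFun hT p
      exact congrArg Fin.val this
    -- build permutation
    let fe : ∀ p : P, {c // col (es i) c = p} ≃ {c // col (es j) c = p} :=
      fun p => Fintype.equivOfCardEq (hfib p)
    let π : Equiv.Perm (Fin n) := Equiv.ofFiberEquiv fe
    have hπ : ∀ c, col (es j) (π c) = col (es i) c := fun c => Equiv.ofFiberEquiv_map fe c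
    have hej : es j ∘ π = es i := by
      funext c
      have := congrFun (hπ c) 0
      simpa [col] using this
    have hvs : ∀ t, vs t ∘ π = vs t := by
      intro t
      funext c
      have := congrFun (hπ c) t.succ
      simpa [col] using this
    -- vs fixed by powers of π
    have hvspow : ∀ (s : ℕ) (t : Fin ℓ), vs t ∘ (π ^ s : Equiv.Perm (Fin n)) = vs t := by
      intro s
      induction s with
      | zero => intro t; simp
      | succ s ih =>
        intro t
        have : ((π ^ (s + 1) : Equiv.Perm (Fin n)) : Fin n → Fin n)
            = (π ^ s : Equiv.Perm (Fin n)) ∘ π := by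
          funext c; rw [pow_succ]; rfl
        rw [this, ← Function.comp_assoc, ih t, hvs t]
    have hbase : RhoRel ρ vs (es j ∘ π) (es j) := by rw [hej]; exact hchain' i j hij
    have hiter : ∀ s : ℕ, RhoRel ρ vs (es j ∘ (π ^ (s + 1) : Equiv.Perm (Fin n))) (es j) := by
      intro s
      induction s with
      | zero => simpa using hbase
      | succ s ih =>
        have hstep : RhoRel ρ vs ((es j ∘ π) ∘ (π ^ (s + 1) : Equiv.Perm (Fin n)))
            (es j ∘ (π ^ (s + 1) : Equiv.Perm (Fin n))) :=
          (rhoRel_comp ρ vs _ (hvspow (s + 1)) _ _).mpr hbase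
        have hcomp : (es j ∘ π) ∘ (π ^ (s + 1) : Equiv.Perm (Fin n))
            = es j ∘ (π ^ (s + 2) : Equiv.Perm (Fin n)) := by
          funext c
          simp only [Function.comp_apply]
          congr 1
          rw [← Equiv.Perm.mul_apply, ← pow_succ', pow_succ, Equiv.Perm.mul_apply]
        rw [hcomp] at hstep
        exact htrans _ _ _ hstep ih
    have hord : 1 ≤ orderOf π := orderOf_pos π
    have := hiter (orderOf π - 1)
    rw [show orderOf π - 1 + 1 = orderOf π by omega, pow_orderOf_eq_one] at this
    simp at this
    exact hirr _ this
  have hinj : Function.Injective (fun i : Fin k => T (es i)) := by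
    intro i j hij
    by_contra hne
    rcases lt_or_gt_of_ne (fun h : (i : ℕ) = (j : ℕ) => hne (Fin.ext h)) with h | h
    · exact hkey i j h hij
    · exact hkey j i h hij.symm
  calc k = Fintype.card (Fin k) := (Fintype.card_fin k).symm
    _ ≤ Fintype.card (P → Fin (n + 1)) := Fintype.card_le_of_injective _ hinj
    _ = (n + 1) ^ (3 ^ (ℓ + 1)) := by
        rw [Fintype.card_fun]
        simp [hP]
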